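/- For every d ≥ 0, the hypercube graph Q_d on {0,1}^d has edge expansion at least 1: for every nonempty subset S ⊆ {0,1}^d with |S| ≤ 2^{d−1}, the number of edges of Q_d with exactly one endpoint in S is at least |S|. -/

import Mathlib

open Finset

lemma hammingDist_cons {d : ℕ} (a b : Bool) (x y : Fin d → Bool) :
    hammingDist (Fin.cons a x : Fin (d+1) → Bool) (Fin.cons b y) =
      (if a = b then 0 else 1) + hammingDist x y := by
  unfold hammingDist
  rw [Finset.card_filter, Finset.card_filter, Fin.sum_univ_succ]
  simp [Fin.cons_zero, Fin.cons_succ, ne_eq]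

/-- ordered boundary pairs -/
def bpairs (d : ℕ) (A : Finset (Fin d → Bool)) : Finset ((Fin d → Bool) × (Fin d → Bool)) :=
  Finset.univ.filter fun p => hammingDist p.1 p.2 = 1 ∧ p.1 ∈ A ∧ p.2 ∉ A

lemma mem_bpairs {d : ℕ} {A : Finset (Fin d → Bool)} {p} :
    p ∈ bpairs d A ↔ hammingDist p.1 p.2 = 1 ∧ p.1 ∈ A ∧ p.2 ∉ A := by
  simp [bpairs]

lemma bpairs_compl_card (d : ℕ) (A : Finset (Fin d → Bool)) :
    (bpairs d Aᶜ).card = (bpairs d A).card := by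
  apply Finset.card_bij (fun p _ => Prod.swap p)
  · intro p hp
    rw [mem_bpairs] at hp ⊢
    simp only [Finset.mem_compl, not_not] at hp
    refine ⟨by rw [Prod.fst_swap, Prod.snd_swap, hammingDist_comm]; exact hp.1, ?_, ?_⟩
    · simpa using hp.2.2
    · simpa using hp.2.1
  · intro p _ q _ h
    exact Prod.swap_injective h
  · intro p hp
    refine ⟨Prod.swap p, ?_, by simp⟩
    rw [mem_bpairs] at hp ⊢
    simp only [Finset.mem_compl, Prod.fst_swap, Prod.snd_swap, not_not]
    exact ⟨by rw [hammingDist_comm]; exact hp.1, hp.2.2, hp.2.1⟩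

def resA {d : ℕ} (b : Bool) (A : Finset (Fin (d+1) → Bool)) : Finset (Fin d → Bool) :=
  Finset.univ.filter fun y => Fin.cons b y ∈ A

lemma mem_resA {d : ℕ} {b : Bool} {A : Finset (Fin (d+1) → Bool)} {y} :
    y ∈ resA b A ↔ (Fin.cons b y : Fin (d+1) → Bool) ∈ A := by simp [resA]

lemma cons_inj {d : ℕ} (b : Bool) :
    Function.Injective (fun y : Fin d → Bool => (Fin.cons b y : Fin (d+1) → Bool)) := by
  intro y y' h
  have := congrArg Fin.tail h
  simpa [Fin.tail_cons] using this

lemma cons_ne {d : ℕ} (y y' : Fin d → Bool) :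
    (Fin.cons false y : Fin (d+1) → Bool) ≠ Fin.cons true y' := by
  intro h
  have := congrFun h 0
  simp at this

lemma card_split {d : ℕ} (A : Finset (Fin (d+1) → Bool)) :
    A.card = (resA false A).card + (resA true A).card := by
  have key : ∀ b : Bool, (A.filter fun x => x 0 = b).card = (resA b A).card := by
    intro b
    apply Finset.card_bij (fun x _ => Fin.tail x)
    · intro x hx
      simp only [Finset.mem_filter] at hx
      rw [mem_resA, ← hx.2, Fin.cons_self_tail]
      exact hx.1
    · intro x hx x' hx' h
      simp only [Finset.mem_filter] at hx hx'
      rw [← Fin.cons_self_tail x, ← Fin.cons_self_tail x', hx.2, hx'.2, h]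
    · intro y hy
      rw [mem_resA] at hy
      exact ⟨Fin.cons b y, by simp [hy, Fin.cons_zero], by simp [Fin.tail_cons]⟩
  rw [← key false, ← key true, ← Finset.card_filter_add_card_filter_not
    (p := fun x : Fin (d+1) → Bool => x 0 = false)]
  congr 1
  apply Finset.card_nbij id
  · intro x hx; simp only [Finset.mem_coe, Finset.mem_filter] at hx ⊢
    exact ⟨hx.1, by simpa using hx.2⟩
  · intro x _ y _ h; exact h
  · intro x hx; simp only [Finset.coe_filter, Set.mem_setOf_eq, Set.mem_image] at hx ⊢
    exact ⟨x, ⟨hx.1, by simpa using hx.2⟩, rfl⟩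

lemma main_bound : ∀ d : ℕ, ∀ A : Finset (Fin d → Bool),
    2 * A.card ≤ 2 ^ d → A.card ≤ (bpairs d A).card := by
  intro d
  induction d with
  | zero =>
    intro A hA
    simp only [pow_zero] at hA
    omega
  | succ d ih =>
    intro A hA
    set F := resA false A with hF
    set T := resA true A with hT
    have hsplit : A.card = F.card + T.card := card_split A
    have hN : Fintype.card (Fin d → Bool) = 2 ^ d := by simp
    -- the four disjoint pieces of the boundary
    set If : Finset ((Fin (d+1) → Bool) × (Fin (d+1) → Bool)) :=
      (bpairs d F).image (fun p => (Fin.cons false p.1, Fin.cons false p.2)) with hIf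
    set It : Finset ((Fin (d+1) → Bool) × (Fin (d+1) → Bool)) :=
      (bpairs d T).image (fun p => (Fin.cons true p.1, Fin.cons true p.2)) with hIt
    set Cf : Finset ((Fin (d+1) → Bool) × (Fin (d+1) → Bool)) :=
      (F \ T).image (fun y => (Fin.cons false y, Fin.cons true y)) with hCf
    set Ct : Finset ((Fin (d+1) → Bool) × (Fin (d+1) → Bool)) :=
      (T \ F).image (fun y => (Fin.cons true y, Fin.cons false y)) with hCt
    have hsub : If ∪ It ∪ Cf ∪ Ct ⊆ bpairs (d+1) A := by
      intro p hp
      simp only [Finset.mem_union, hIf, hIt, hCf, hCt, Finset.mem_image] at hp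
      rcases hp with ((⟨q, hq, rfl⟩ | ⟨q, hq, rfl⟩) | ⟨y, hy, rfl⟩) | ⟨y, hy, rfl⟩
      · rw [mem_bpairs] at hq ⊢
        exact ⟨by rw [hammingDist_cons]; simp [hq.1], (mem_resA).1 hq.2.1,
          fun h => hq.2.2 ((mem_resA).2 h)⟩
      · rw [mem_bpairs] at hq ⊢
        exact ⟨by rw [hammingDist_cons]; simp [hq.1], (mem_resA).1 hq.2.1,
          fun h => hq.2.2 ((mem_resA).2 h)⟩
      · rw [Finset.mem_sdiff] at hy
        rw [mem_bpairs]
        exact ⟨by rw [hammingDist_cons]; simp, (mem_resA).1 hy.1,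
          fun h => hy.2 ((mem_resA).2 h)⟩
      · rw [Finset.mem_sdiff] at hy
        rw [mem_bpairs]
        exact ⟨by rw [hammingDist_cons]; simp, (mem_resA).1 hy.1,
          fun h => hy.2 ((mem_resA).2 h)⟩
    have hd1 : Disjoint If It := by
      rw [Finset.disjoint_left]
      rintro p hp hp'
      simp only [hIf, hIt, Finset.mem_image] at hp hp'
      obtain ⟨q, _, rfl⟩ := hp
      obtain ⟨r, _, h⟩ := hp'
      exact cons_ne _ _ (congrArg Prod.fst h).symm
    have hd2 : Disjoint (If ∪ It) Cf := by
      rw [Finset.disjoint_left]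
      rintro p hp hp'
      simp only [hIf, hIt, hCf, Finset.mem_union, Finset.mem_image] at hp hp'
      obtain ⟨y, _, rfl⟩ := hp'
      rcases hp with ⟨q, _, h⟩ | ⟨q, _, h⟩
      · exact cons_ne _ _ (congrArg Prod.snd h)
      · exact cons_ne _ _ (congrArg Prod.fst h).symm
    have hd3 : Disjoint (If ∪ It ∪ Cf) Ct := by
      rw [Finset.disjoint_left]
      rintro p hp hp'
      simp only [hIf, hIt, hCf, hCt, Finset.mem_union, Finset.mem_image] at hp hp'
      obtain ⟨y, _, rfl⟩ := hp'
      rcases hp with (⟨q, _, h⟩ | ⟨q, _, h⟩) | ⟨q, _, h⟩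
      · exact cons_ne _ _ (congrArg Prod.fst h)
      · exact cons_ne _ _ (congrArg Prod.snd h).symm
      · exact cons_ne _ _ (congrArg Prod.fst h)
    have hinj : ∀ b : Bool, Function.Injective
        (fun p : (Fin d → Bool) × (Fin d → Bool) =>
          ((Fin.cons b p.1 : Fin (d+1) → Bool), (Fin.cons b p.2 : Fin (d+1) → Bool))) := by
      intro b p q h
      have h1 := cons_inj b (congrArg Prod.fst h)
      have h2 := cons_inj b (congrArg Prod.snd h)
      exact Prod.ext h1 h2
    have hinjc : ∀ b b' : Bool, Function.Injective
        (fun y : Fin d → Bool =>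
          ((Fin.cons b y : Fin (d+1) → Bool), (Fin.cons b' y : Fin (d+1) → Bool))) := by
      intro b b' y y' h
      exact cons_inj b (congrArg Prod.fst h)
    have hcards : If.card = (bpairs d F).card ∧ It.card = (bpairs d T).card ∧
        Cf.card = (F \ T).card ∧ Ct.card = (T \ F).card :=
      ⟨Finset.card_image_of_injective _ (hinj false),
       Finset.card_image_of_injective _ (hinj true),
       Finset.card_image_of_injective _ (hinjc false true),
       Finset.card_image_of_injective _ (hinjc true false)⟩
    have htotal : (bpairs d F).card + (bpairs d T).card + (F \ T).card + (T \ F).card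
        ≤ (bpairs (d+1) A).card := by
      calc (bpairs d F).card + (bpairs d T).card + (F \ T).card + (T \ F).card
          = (If ∪ It ∪ Cf ∪ Ct).card := by
            rw [Finset.card_union_of_disjoint hd3, Finset.card_union_of_disjoint hd2,
              Finset.card_union_of_disjoint hd1, hcards.1, hcards.2.1, hcards.2.2.1,
              hcards.2.2.2]
        _ ≤ (bpairs (d+1) A).card := Finset.card_le_card hsub
    -- numeric part
    have hab : F.card + T.card ≤ 2 ^ d := by
      rw [← hsplit]; rw [pow_succ] at hA; omega
    have hsdF : T.card - F.card ≤ (T \ F).card := Finset.le_card_sdiff F T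
    have hsdT : F.card - T.card ≤ (F \ T).card := Finset.le_card_sdiff T F
    by_cases h1 : 2 * F.card ≤ 2 ^ d
    · by_cases h2 : 2 * T.card ≤ 2 ^ d
      · have b1 := ih F h1
        have b2 := ih T h2
        omega
      · -- T is large: use complement of T
        have hTc : Tᶜ.card = 2 ^ d - T.card := by
          rw [Finset.card_compl, hN]
        have hTc2 : 2 * Tᶜ.card ≤ 2 ^ d := by omega
        have b2 := ih Tᶜ hTc2
        rw [bpairs_compl_card] at b2
        have b1 := ih F h1
        omega
    · -- F is large: use complement of F
      have h2 : 2 * T.card ≤ 2 ^ d := by omega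
      have hFc : Fᶜ.card = 2 ^ d - F.card := by
        rw [Finset.card_compl, hN]
      have hFc2 : 2 * Fᶜ.card ≤ 2 ^ d := by omega
      have b1 := ih Fᶜ hFc2
      rw [bpairs_compl_card] at b1
      have b2 := ih T h2
      omega

/-- The hypercube graph `Q_d` on vertex set `{0,1}^d`: two vertices are adjacent iff
they differ in exactly one coordinate. -/
def cubeGraph (d : ℕ) : SimpleGraph (Fin d → Bool) where
  Adj x y := hammingDist x y = 1
  symm := by
    constructor
    intro x y h
    rwa [hammingDist_comm]
  loopless := by
    constructor
    intro x h
    simp [hammingDist_self] at h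

/-- The set of edges of `G` with exactly one endpoint in `X`. -/
def edgeBoundary {V : Type*} (G : SimpleGraph V) (X : Set V) : Set (Sym2 V) :=
  {e | e ∈ G.edgeSet ∧ ∃ v w, e = s(v, w) ∧ v ∈ X ∧ w ∉ X}

/-- The hypercube graph `Q_d` has edge expansion at least 1: every nonempty vertex set
`S` with `|S| ≤ 2^{d-1}` (i.e. `2|S| ≤ 2^d`) has at least `|S|` boundary edges. -/
theorem cubeGraph_edge_expansion
    (d : ℕ) (S : Set (Fin d → Bool)) (hS : S.Nonempty)
    (hS2 : 2 * S.ncard ≤ 2 ^ d) :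
    S.ncard ≤ (edgeBoundary (cubeGraph d) S).ncard := by
  classical
  set A : Finset (Fin d → Bool) := S.toFinite.toFinset with hAdef
  have hmemA : ∀ x, x ∈ A ↔ x ∈ S := fun x => Set.Finite.mem_toFinset _
  have hcardS : S.ncard = A.card := Set.ncard_eq_toFinset_card S S.toFinite
  have h1 : A.card ≤ (bpairs d A).card := main_bound d A (by omega)
  set B := edgeBoundary (cubeGraph d) S with hB
  have hBfin : B.Finite := Set.toFinite _
  have hBcard : B.ncard = hBfin.toFinset.card := Set.ncard_eq_toFinset_card B hBfin
  have himg : (bpairs d A).image (fun p => s(p.1, p.2)) ⊆ hBfin.toFinset := by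
    intro e he
    simp only [Finset.mem_image] at he
    obtain ⟨p, hp, rfl⟩ := he
    rw [mem_bpairs] at hp
    rw [Set.Finite.mem_toFinset]
    exact ⟨(cubeGraph d).mem_edgeSet.2 hp.1, p.1, p.2, rfl,
      (hmemA p.1).1 hp.2.1, fun h => hp.2.2 ((hmemA p.2).2 h)⟩
  have hinj : Set.InjOn (fun p : (Fin d → Bool) × (Fin d → Bool) => s(p.1, p.2))
      ↑(bpairs d A) := by
    intro p hp q hq h
    rw [Finset.mem_coe, mem_bpairs] at hp hq
    rw [Sym2.eq_iff] at h
    rcases h with ⟨h1, h2⟩ | ⟨h1, h2⟩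
    · exact Prod.ext h1 h2
    · exact absurd (h1 ▸ hp.2.1) hq.2.2
  have h2 : (bpairs d A).card ≤ hBfin.toFinset.card := by
    rw [← Finset.card_image_of_injOn hinj]
    exact Finset.card_le_card himg
  omega
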